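/- Let F be a Borel probability measure on [0,1] with F({1}) = 0, and let x_1, …, x_n be independent random variables each with distribution F. Let m_k(F) = ∫₀¹ x^k dF(x) denote the k-th moment of F. If the series ∑_{k=0}^∞ m_k(F)^n converges, then the random variable 1/(1 − x_1 x_2 ⋯ x_n) is integrable and E[1/(1 − x_1 ⋯ x_n)] = ∑_{k=0}^∞ m_k(F)^n = 1 + ζ_F(n); if the series diverges, the expectation is infinite. -/

import Mathlib

open MeasureTheory ProbabilityTheory

lemma aux_integral_prod {Ω : Type*} [MeasureSpace Ω] [IsProbabilityMeasure (ℙ : Measure Ω)]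
    {ι : Type*} (g : ι → Ω → ℝ) (hg : ∀ i, Measurable (g i))
    (hind : iIndepFun g ℙ) (s : Finset ι) :
    ∫ ω, ∏ i ∈ s, g i ω ∂ℙ = ∏ i ∈ s, ∫ ω, g i ω ∂ℙ := by
  classical
  induction s using Finset.induction_on with
  | empty => simp
  | @insert j s hj ih =>
    have hInd : IndepFun (g j) (∏ i ∈ s, g i) ℙ :=
      (hind.indepFun_finsetProd_of_notMem hg hj).symm
    have hprodmeas : Measurable (∏ i ∈ s, g i) := by
      have : (∏ i ∈ s, g i) = fun ω => ∏ i ∈ s, g i ω := by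
        ext ω; simp [Finset.prod_apply]
      rw [this]
      exact Finset.measurable_prod s (fun i _ => hg i)
    have := hInd.integral_mul_eq_mul_integral (hg j).aestronglyMeasurable hprodmeas.aestronglyMeasurable
    simp only [Finset.prod_insert hj]
    have heq : (∫ ω, g j ω * ∏ i ∈ s, g i ω ∂ℙ) = ∫ ω, (g j * ∏ i ∈ s, g i) ω ∂ℙ := by
      congr 1; ext ω; simp [Finset.prod_apply]
    rw [heq, this, ← ih]
    congr 1
    congr 1; ext ω; simp [Finset.prod_apply]

theorem expectation_inv_one_sub_prod_eq_moment_zeta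
    (μ : Measure ℝ) [IsProbabilityMeasure μ]
    (hsupp : μ (Set.Icc (0 : ℝ) 1)ᶜ = 0) (h1 : μ {(1 : ℝ)} = 0)
    (n : ℕ) (hn : 1 ≤ n)
    {Ω : Type*} [MeasureSpace Ω] [IsProbabilityMeasure (ℙ : Measure Ω)]
    (x : Fin n → Ω → ℝ) (hmeas : ∀ i, Measurable (x i))
    (hindep : iIndepFun x ℙ)
    (hdist : ∀ i, Measure.map (x i) ℙ = μ) :
    (Summable (fun k : ℕ => (∫ t, t ^ k ∂μ) ^ n) →
      Integrable (fun ω => 1 / (1 - ∏ i, x i ω)) ℙ ∧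
      (∫ ω, 1 / (1 - ∏ i, x i ω) ∂ℙ) = ∑' k : ℕ, (∫ t, t ^ k ∂μ) ^ n ∧
      (∫ ω, 1 / (1 - ∏ i, x i ω) ∂ℙ) = 1 + ∑' k : ℕ, (∫ t, t ^ (k + 1) ∂μ) ^ n) ∧
    (¬ Summable (fun k : ℕ => (∫ t, t ^ k ∂μ) ^ n) →
      (∫⁻ ω, ENNReal.ofReal (1 / (1 - ∏ i, x i ω)) ∂ℙ) = ⊤) := by
  classical
  set m : ℕ → ℝ := fun k => ∫ t, t ^ k ∂μ with hm_def
  set P : Ω → ℝ := fun ω => ∏ i, x i ω with hP_def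
  have hPmeas : Measurable P := Finset.measurable_prod Finset.univ (fun i _ => hmeas i)
  have hfmeas : Measurable (fun ω => 1 / (1 - P ω)) :=
    (measurable_const.sub hPmeas).const_div 1
  -- the complement of [0,1) is μ-null
  have hIco : μ (Set.Ico (0 : ℝ) 1)ᶜ = 0 := by
    refine measure_mono_null (fun t ht => ?_) (measure_union_null hsupp h1)
    simp only [Set.mem_compl_iff, Set.mem_Ico, not_and_or, not_le, not_lt] at ht
    by_cases hIcc : t ∈ Set.Icc (0 : ℝ) 1
    · right
      rcases ht with h | h
      · exact absurd hIcc.1 (not_le.mpr h)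
      · exact le_antisymm hIcc.2 h
    · exact Or.inl hIcc
  -- a.e. each coordinate lies in [0,1)
  have hA : ∀ᵐ ω ∂ℙ, ∀ i, x i ω ∈ Set.Ico (0 : ℝ) 1 := by
    rw [ae_all_iff]
    intro i
    rw [ae_iff]
    have : {ω | ¬ x i ω ∈ Set.Ico (0 : ℝ) 1} = x i ⁻¹' (Set.Ico (0 : ℝ) 1)ᶜ := rfl
    rw [this, ← Measure.map_apply (hmeas i) (measurableSet_Ico.compl), hdist i, hIco]
  -- a.e. the product lies in [0,1)
  have hP : ∀ᵐ ω ∂ℙ, P ω ∈ Set.Ico (0 : ℝ) 1 := by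
    filter_upwards [hA] with ω hω
    constructor
    · exact Finset.prod_nonneg fun i _ => (hω i).1
    · set i0 : Fin n := ⟨0, hn⟩
      calc ∏ i, x i ω ≤ ∏ i, (if i = i0 then x i ω else 1) := by
            refine Finset.prod_le_prod (fun i _ => (hω i).1) (fun i _ => ?_)
            by_cases h : i = i0
            · simp [h]
            · simp [h, (hω i).2.le]
        _ = x i0 ω := by simp
        _ < 1 := (hω i0).2
  -- measure-theoretic facts about μ
  have hμae : ∀ᵐ t ∂μ, t ∈ Set.Icc (0 : ℝ) 1 := by
    rw [ae_iff]; exact hsupp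
  have hm_nonneg : ∀ k, 0 ≤ m k := fun k =>
    integral_nonneg_of_ae (by filter_upwards [hμae] with t ht using pow_nonneg ht.1 k)
  -- distribution of moments
  have hxik : ∀ i k, (∫ ω, (x i ω) ^ k ∂ℙ) = m k := by
    intro i k
    rw [hm_def]
    show _ = ∫ t, t ^ k ∂μ
    rw [← hdist i]
    exact (integral_map (hmeas i).aemeasurable
      ((measurable_id.pow_const k).aestronglyMeasurable)).symm
  -- expectation of P^k
  have hEk : ∀ k : ℕ, (∫ ω, P ω ^ k ∂ℙ) = m k ^ n := by
    intro k
    have hcomp : iIndepFun (fun i ω => (x i ω) ^ k) ℙ :=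
      hindep.comp (fun _ t => t ^ k) (fun _ => measurable_id.pow_const k)
    have := aux_integral_prod (fun i ω => (x i ω) ^ k)
      (fun i => (hmeas i).pow_const k) hcomp Finset.univ
    simp only [hP_def, ← Finset.prod_pow]
    rw [this]
    simp [hxik, Finset.prod_const, Finset.card_univ]
  -- P^k is integrable
  have hPk_int : ∀ k : ℕ, Integrable (fun ω => P ω ^ k) ℙ := by
    intro k
    refine ⟨(hPmeas.pow_const k).aestronglyMeasurable, HasFiniteIntegral.of_bounded (C := 1) ?_⟩
    filter_upwards [hP] with ω hω
    rw [Real.norm_eq_abs, abs_of_nonneg (pow_nonneg hω.1 k)]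
    exact pow_le_one₀ hω.1 hω.2.le
  have hPk_nonneg : ∀ k : ℕ, 0 ≤ᵐ[ℙ] (fun ω => P ω ^ k) := fun k => by
    filter_upwards [hP] with ω hω using pow_nonneg hω.1 k
  -- key lintegral identity
  have hkey : (∫⁻ ω, ENNReal.ofReal (1 / (1 - P ω)) ∂ℙ)
      = ∑' k : ℕ, ENNReal.ofReal (m k ^ n) := by
    have h1 : ∀ᵐ ω ∂ℙ, ENNReal.ofReal (1 / (1 - P ω))
        = ∑' k : ℕ, ENNReal.ofReal (P ω ^ k) := by
      filter_upwards [hP] with ω hω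
      have hsum : Summable (fun k : ℕ => P ω ^ k) :=
        summable_geometric_of_lt_one hω.1 hω.2
      rw [one_div, ← tsum_geometric_of_lt_one hω.1 hω.2,
        ENNReal.ofReal_tsum_of_nonneg (fun k => pow_nonneg hω.1 k) hsum]
    rw [lintegral_congr_ae h1,
      lintegral_tsum (fun k => ((hPmeas.pow_const k).ennreal_ofReal).aemeasurable)]
    congr 1
    ext k
    rw [← ofReal_integral_eq_lintegral_ofReal (hPk_int k) (hPk_nonneg k), hEk k]
  have hf_nonneg : 0 ≤ᵐ[ℙ] (fun ω => 1 / (1 - P ω)) := by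
    filter_upwards [hP] with ω hω
    have : (0 : ℝ) < 1 - P ω := by linarith [hω.2]
    positivity
  constructor
  · intro hs
    have hofReal : (∑' k : ℕ, ENNReal.ofReal (m k ^ n))
        = ENNReal.ofReal (∑' k : ℕ, m k ^ n) :=
      (ENNReal.ofReal_tsum_of_nonneg (fun k => pow_nonneg (hm_nonneg k) n) hs).symm
    have hInt : Integrable (fun ω => 1 / (1 - P ω)) ℙ := by
      refine ⟨hfmeas.aestronglyMeasurable, ?_⟩
      show (∫⁻ ω, (‖1 / (1 - P ω)‖₊ : ENNReal) ∂ℙ) < ⊤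
      have : (∫⁻ ω, (‖1 / (1 - P ω)‖₊ : ENNReal) ∂ℙ)
          = ∫⁻ ω, ENNReal.ofReal (1 / (1 - P ω)) ∂ℙ := by
        refine lintegral_congr_ae ?_
        filter_upwards [hf_nonneg] with ω hω
        exact Real.enorm_eq_ofReal hω
      rw [this, hkey, hofReal]
      exact ENNReal.ofReal_lt_top
    have hEq : (∫ ω, 1 / (1 - P ω) ∂ℙ) = ∑' k : ℕ, m k ^ n := by
      rw [integral_eq_lintegral_of_nonneg_ae hf_nonneg hfmeas.aestronglyMeasurable,
        hkey, hofReal, ENNReal.toReal_ofReal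
          (tsum_nonneg (fun k => pow_nonneg (hm_nonneg k) n))]
    refine ⟨hInt, hEq, ?_⟩
    rw [hEq, Summable.tsum_eq_zero_add hs]
    have hm0 : (∫ t : ℝ, t ^ 0 ∂μ) = 1 := by
      simp [measure_univ]
    rw [hm0, one_pow]
  · intro hs
    rw [hkey]
    by_contra h
    apply hs
    have := ENNReal.summable_toReal h
    refine this.congr fun k => ?_
    rw [ENNReal.toReal_ofReal (pow_nonneg (hm_nonneg k) n)]
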